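/- Let ρ : [0,1] → ℂ be continuous and v ∈ ℂ \ ρ([0,1]). Fix 0 ≤ a < b ≤ 1. Then the total rotational angle ∠(ρ(a) v ρ(b), ρ) — defined as the sum of directed angles ∠ρ(r_{k-1}) v ρ(r_k) over any partition a = r₀ < r₁ < ... < r_n = b with mesh less than δ (where δ is chosen so that |ρ(r) - ρ(s)| < d(v, ρ([0,1]))/3 whenever |r - s| < δ) — is independent of the choice of such a partition. -/

import Mathlib

open Complex

/-- The directed angle `∠ x v y ∈ (-π, π]` from the ray `v → x` to the ray `v → y`. -/
noncomputable def dirAngle (v x y : ℂ) : ℝ := Complex.arg ((y - v) / (x - v))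

/-- `r` is a partition of `[a,b]` into `n` steps with mesh `< δ`. -/
def IsFinePartition (a b δ : ℝ) (n : ℕ) (r : ℕ → ℝ) : Prop :=
  r 0 = a ∧ r n = b ∧ ∀ k < n, 0 < r (k + 1) - r k ∧ r (k + 1) - r k < δ

/-- The sum of directed angles seen from `v` along the partition `r` of the path `ρ`. -/
noncomputable def angSum (ρ : ℝ → ℂ) (v : ℂ) (n : ℕ) (r : ℕ → ℝ) : ℝ :=
  ∑ k ∈ Finset.range n, dirAngle v (ρ (r k)) (ρ (r (k + 1)))

namespace Stmt13Aux

/-- Context: the path avoids `v` and all pairs of parameters within `δ` give a small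
directed angle as seen from `v`. -/
def Good (ρ : ℝ → ℂ) (v : ℂ) (δ : ℝ) : Prop :=
  (∀ t ∈ Set.Icc (0:ℝ) 1, ρ t ≠ v) ∧
  ∀ s ∈ Set.Icc (0:ℝ) 1, ∀ t ∈ Set.Icc (0:ℝ) 1, |s - t| < δ →
    |dirAngle v (ρ s) (ρ t)| < Real.pi / 2

lemma sub_ne {v x : ℂ} (hx : x ≠ v) : x - v ≠ 0 := sub_ne_zero.mpr hx

lemma dirAngle_self {v x : ℂ} (hx : x ≠ v) : dirAngle v x x = 0 := by
  unfold dirAngle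
  rw [div_self (sub_ne hx), Complex.arg_one]

lemma dirAngle_add {v x y z : ℂ} (hx : x ≠ v) (hy : y ≠ v) (hz : z ≠ v)
    (h1 : |dirAngle v x y| < Real.pi / 2) (h2 : |dirAngle v y z| < Real.pi / 2) :
    dirAngle v x z = dirAngle v x y + dirAngle v y z := by
  have hxy : (y - v) / (x - v) ≠ 0 := div_ne_zero (sub_ne hy) (sub_ne hx)
  have hyz : (z - v) / (y - v) ≠ 0 := div_ne_zero (sub_ne hz) (sub_ne hy)
  have hprod : (y - v) / (x - v) * ((z - v) / (y - v)) = (z - v) / (x - v) := by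
    rw [div_mul_div_comm, mul_comm (y - v) (z - v)]
    exact mul_div_mul_right _ _ (sub_ne hy)
  have hπ := Real.pi_pos
  obtain ⟨h1l, h1r⟩ := abs_lt.1 h1
  obtain ⟨h2l, h2r⟩ := abs_lt.1 h2
  unfold dirAngle at *
  rw [← hprod]
  exact Complex.arg_mul hxy hyz ⟨by linarith, by linarith⟩

lemma part_strictMono {a b δ : ℝ} {n : ℕ} {r : ℕ → ℝ} (h : IsFinePartition a b δ n r) :
    ∀ l ≤ n, ∀ k < l, r k < r l := by
  intro l
  induction l with
  | zero => intro _ k hk; omega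
  | succ m ih =>
    intro hl k hk
    have hs := (h.2.2 m (by omega)).1
    rcases Nat.lt_succ_iff_lt_or_eq.1 hk with h' | h'
    · have := ih (by omega) k h'; linarith
    · subst h'; linarith

lemma part_mem {a b δ : ℝ} {n : ℕ} {r : ℕ → ℝ} (h : IsFinePartition a b δ n r) :
    ∀ k ≤ n, a ≤ r k ∧ r k ≤ b := by
  intro k hk
  constructor
  · rcases Nat.eq_zero_or_pos k with rfl | hkpos
    · rw [h.1]
    · have := part_strictMono h k hk 0 hkpos; rw [h.1] at this; linarith
  · rcases eq_or_lt_of_le hk with rfl | hk'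
    · rw [h.2.1]
    · have := part_strictMono h n le_rfl k hk'; rw [h.2.1] at this; linarith

/-- Splitting a sum over `range (m + k)`. -/
lemma sum_range_split (f : ℕ → ℝ) (m k : ℕ) :
    ∑ i ∈ Finset.range (m + k), f i
      = ∑ i ∈ Finset.range m, f i + ∑ i ∈ Finset.range k, f (m + i) := by
  induction k with
  | zero => simp
  | succ k ih =>
    rw [show m + (k + 1) = (m + k) + 1 from rfl, Finset.sum_range_succ,
      Finset.sum_range_succ, ih]
    ring

/-- If the whole partitioned interval has length `< δ`, the angle sum collapses. -/
lemma collapse {ρ : ℝ → ℂ} {v : ℂ} {δ : ℝ} (hg : Good ρ v δ) :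
    ∀ (m : ℕ) (a c : ℝ) (r : ℕ → ℝ), 0 ≤ a → c ≤ 1 → c - a < δ →
      IsFinePartition a c δ m r → angSum ρ v m r = dirAngle v (ρ a) (ρ c) := by
  intro m
  induction m with
  | zero =>
    intro a c r ha hc hd hp
    have hac : a = c := by rw [← hp.1, hp.2.1]
    subst hac
    have h0 : ρ a ≠ v := hg.1 a ⟨ha, hc⟩
    simp [angSum, dirAngle_self h0]
  | succ m ih =>
    intro a c r ha hc hd hp
    obtain ⟨h0, hm, hstep⟩ := hp
    have hp' : IsFinePartition a (r m) δ m r := ⟨h0, rfl, fun k hk => hstep k (by omega)⟩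
    have hac' : a ≤ r m := (part_mem hp' m le_rfl).1
    have hc'c : r m < c := by have := (hstep m (by omega)).1; rw [hm] at this; linarith
    have hmem_a : a ∈ Set.Icc (0:ℝ) 1 := ⟨ha, by linarith⟩
    have hmem_c' : r m ∈ Set.Icc (0:ℝ) 1 := ⟨by linarith, by linarith⟩
    have hmem_c : c ∈ Set.Icc (0:ℝ) 1 := ⟨by linarith, hc⟩
    have key := ih a (r m) r ha (by linarith) (by linarith) hp'
    have hA : |dirAngle v (ρ a) (ρ (r m))| < Real.pi / 2 :=
      hg.2 a hmem_a (r m) hmem_c' (by rw [abs_sub_comm, _root_.abs_of_nonneg (by linarith)]; linarith)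
    have hB : |dirAngle v (ρ (r m)) (ρ c)| < Real.pi / 2 :=
      hg.2 (r m) hmem_c' c hmem_c (by rw [abs_sub_comm, _root_.abs_of_nonneg (by linarith)]; linarith)
    have hsplit := dirAngle_add (hg.1 a hmem_a) (hg.1 (r m) hmem_c') (hg.1 c hmem_c) hA hB
    unfold angSum at key ⊢
    rw [Finset.sum_range_succ, key, hm, hsplit]

/-- Angle sums over fine partitions of `[a,b]` agree. -/
lemma main {ρ : ℝ → ℂ} {v : ℂ} {δ : ℝ} (hg : Good ρ v δ) :
    ∀ (n : ℕ) (a b : ℝ) (n' : ℕ) (r r' : ℕ → ℝ), 0 ≤ a → a < b → b ≤ 1 →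
      IsFinePartition a b δ n r → IsFinePartition a b δ n' r' →
      angSum ρ v n r = angSum ρ v n' r' := by
  intro n
  induction n with
  | zero =>
    intro a b n' r r' ha hab hb hr hr'
    exfalso
    have h1 := hr.1
    have h2 := hr.2.1
    rw [h1] at h2
    linarith
  | succ n ih =>
    intro a b n' r r' ha hab hb hr hr'
    rcases Nat.eq_zero_or_pos n with rfl | hn
    · have hba : b - a < δ := by
        have := (hr.2.2 0 (by omega)).2
        rw [hr.1, hr.2.1] at this
        exact this
      rw [collapse hg 1 a b r ha hb hba hr, collapse hg n' a b r' ha hb hba hr']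
    · -- n ≥ 1 here
      obtain ⟨hr0, hrn, hrstep⟩ := hr
      set c := r 1 with hcdef
      have hac : a < c := by have := (hrstep 0 (by omega)).1; rw [hr0] at this; linarith
      have hcb : c < b := by
        have := part_strictMono ⟨hr0, hrn, hrstep⟩ (n+1) le_rfl 1 (by omega)
        rw [hrn] at this; exact this
      have hcaδ : c - a < δ := by
        have := (hrstep 0 (by omega)).2; rw [hr0] at this; exact this
      have hrt : IsFinePartition c b δ n (fun k => r (k+1)) :=
        ⟨rfl, hrn, fun k hk => hrstep (k+1) (by omega)⟩
      have hmem_a : a ∈ Set.Icc (0:ℝ) 1 := ⟨ha, by linarith⟩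
      have hmem_c : c ∈ Set.Icc (0:ℝ) 1 := ⟨by linarith, by linarith⟩
      have hLHS : angSum ρ v (n+1) r
          = dirAngle v (ρ a) (ρ c) + angSum ρ v n (fun k => r (k+1)) := by
        unfold angSum
        rw [Finset.sum_range_succ' (fun k => dirAngle v (ρ (r k)) (ρ (r (k+1)))) n, hr0]
        ring
      obtain ⟨h0', hn', hstep'⟩ := hr'
      classical
      have hex : ∃ j, c ≤ r' j := ⟨n', by rw [hn']; exact le_of_lt hcb⟩
      obtain ⟨i, hji, hmin, hin'⟩ :
          ∃ i, c ≤ r' (i+1) ∧ r' i < c ∧ i + 1 ≤ n' := by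
        set j := Nat.find hex with hjdef
        have hjle : c ≤ r' j := Nat.find_spec hex
        have hjn' : j ≤ n' := Nat.find_min' hex (by rw [hn']; exact le_of_lt hcb)
        have hj1 : 1 ≤ j := by
          rcases Nat.eq_zero_or_pos j with hj0 | h
          · exfalso; rw [hj0, h0'] at hjle; linarith
          · exact h
        refine ⟨j - 1, ?_, ?_, by omega⟩
        · rw [show j - 1 + 1 = j from by omega]; exact hjle
        · have := Nat.find_min hex (show j - 1 < j by omega)
          exact lt_of_not_ge this
      have hstep_i := hstep' i (by omega)
      have hi_mem := part_mem ⟨h0', hn', hstep'⟩ i (by omega)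
      have hi1_mem := part_mem ⟨h0', hn', hstep'⟩ (i+1) hin'
      have hmem_ri : r' i ∈ Set.Icc (0:ℝ) 1 := ⟨by linarith [hi_mem.1], by linarith [hi_mem.2]⟩
      have hmem_ri1 : r' (i+1) ∈ Set.Icc (0:ℝ) 1 :=
        ⟨by linarith [hi1_mem.1], by linarith [hi1_mem.2]⟩
      rcases eq_or_lt_of_le hji with hceq | hclt
      · -- c = r' (i+1): split r' exactly at index i+1
        have hin2 : i + 1 < n' := by
          rcases eq_or_lt_of_le hin' with h | h
          · exfalso; rw [h, hn'] at hceq; linarith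
          · exact h
        set m := n' - (i+1) with hmdef
        have hn'eq : n' = (i+1) + m := by omega
        have hpre : IsFinePartition a c δ (i+1) r' :=
          ⟨h0', hceq.symm, fun k hk => hstep' k (by omega)⟩
        have hsuf : IsFinePartition c b δ m (fun k => r' (i+1+k)) := by
          refine ⟨hceq.symm, ?_, ?_⟩
          · show r' (i+1+m) = b
            rw [show i+1+m = n' from by omega, hn']
          · intro k hk
            exact hstep' (i+1+k) (by omega)
        have hsplitsum : angSum ρ v n' r'
            = angSum ρ v (i+1) r' + angSum ρ v m (fun k => r' (i+1+k)) := by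
          unfold angSum
          rw [hn'eq, sum_range_split]
          congr 1
        rw [hsplitsum, collapse hg (i+1) a c r' ha (by linarith) hcaδ hpre, hLHS,
          ih c b m (fun k => r (k+1)) (fun k => r' (i+1+k)) (by linarith) hcb hb hrt hsuf]
      · -- r' i < c < r' (i+1): insert c
        set m' := n' - i with hm'def
        have hm'1 : 1 ≤ m' := by omega
        set mm := m' - 1 with hmmdef
        have hn'eq : n' = (i+1) + mm := by omega
        -- prefix partition of [a,c]
        set rp : ℕ → ℝ := fun k => if k = i+1 then c else r' k with hrpdef
        have hrp : IsFinePartition a c δ (i+1) rp := by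
          refine ⟨?_, ?_, ?_⟩
          · show (if 0 = i+1 then c else r' 0) = a
            rw [if_neg (by omega)]; exact h0'
          · show (if i+1 = i+1 then c else r' (i+1)) = c
            rw [if_pos rfl]
          · intro k hk
            rcases Nat.lt_succ_iff_lt_or_eq.1 hk with h | h
            · have h1 : rp k = r' k := if_neg (by omega)
              have h2 : rp (k+1) = r' (k+1) := if_neg (by omega)
              rw [h1, h2]
              exact hstep' k (by omega)
            · have h1 : rp k = r' k := if_neg (by omega)
              have h2 : rp (k+1) = c := by rw [h]; exact if_pos rfl
              rw [h1, h2, h]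
              constructor
              · linarith
              · have := hstep_i.2; linarith
        -- suffix partition of [c,b]
        set rs : ℕ → ℝ := fun k => if k = 0 then c else r' (i + k) with hrsdef
        have hrs : IsFinePartition c b δ m' rs := by
          refine ⟨if_pos rfl, ?_, ?_⟩
          · have h1 : rs m' = r' (i + m') := if_neg (by omega)
            rw [h1, show i + m' = n' from by omega, hn']
          · intro k hk
            rcases Nat.eq_zero_or_pos k with rfl | hkpos
            · have h1 : rs 0 = c := if_pos rfl
              have h2 : rs 1 = r' (i+1) := by
                have : rs 1 = r' (i + 1) := if_neg (by omega)
                exact this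
              rw [h1, h2]
              constructor
              · linarith
              · have := hstep_i.2; linarith
            · have h1 : rs k = r' (i + k) := if_neg (by omega)
              have h2 : rs (k+1) = r' (i + (k+1)) := if_neg (by omega)
              rw [h1, h2, show i + (k+1) = (i+k) + 1 from by omega]
              exact hstep' (i+k) (by omega)
        -- the middle angle splits
        have hAngA : |dirAngle v (ρ (r' i)) (ρ c)| < Real.pi / 2 :=
          hg.2 (r' i) hmem_ri c hmem_c
            (by rw [abs_sub_comm, _root_.abs_of_nonneg (by linarith)];
                have := hstep_i.2; linarith)
        have hAngB : |dirAngle v (ρ c) (ρ (r' (i+1)))| < Real.pi / 2 :=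
          hg.2 c hmem_c (r' (i+1)) hmem_ri1
            (by rw [abs_sub_comm, _root_.abs_of_nonneg (by linarith)];
                have := hstep_i.2; linarith)
        have hmid : dirAngle v (ρ (r' i)) (ρ (r' (i+1)))
            = dirAngle v (ρ (r' i)) (ρ c) + dirAngle v (ρ c) (ρ (r' (i+1))) :=
          dirAngle_add (hg.1 _ hmem_ri) (hg.1 _ hmem_c) (hg.1 _ hmem_ri1) hAngA hAngB
        -- split the sum
        have hsplitsum : angSum ρ v n' r' = angSum ρ v (i+1) rp + angSum ρ v m' rs := by
          have e4 : angSum ρ v m' rs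
              = dirAngle v (ρ c) (ρ (r' (i+1)))
                + ∑ k ∈ Finset.range mm,
                    dirAngle v (ρ (r' (i+1+k))) (ρ (r' (i+1+k+1))) := by
            unfold angSum
            rw [show m' = mm + 1 from by omega,
              Finset.sum_range_succ' (fun k => dirAngle v (ρ (rs k)) (ρ (rs (k+1)))) mm]
            have b0 : rs 0 = c := if_pos rfl
            have b1 : rs 1 = r' (i+1) := if_neg (by omega)
            rw [b0, b1, add_comm]
            congr 1
            refine Finset.sum_congr rfl fun k _ => ?_
            have c1 : rs (k+1) = r' (i + (k+1)) := if_neg (by omega)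
            have c2 : rs (k+1+1) = r' (i + (k+1+1)) := if_neg (by omega)
            rw [c1, c2, show i + (k+1) = i+1+k from by omega,
              show i + (k+1+1) = i+1+k+1 from by omega]
          have e5 : angSum ρ v (i+1) rp
              = (∑ k ∈ Finset.range i, dirAngle v (ρ (r' k)) (ρ (r' (k+1))))
                + dirAngle v (ρ (r' i)) (ρ c) := by
            unfold angSum
            rw [Finset.sum_range_succ]
            congr 1
            · refine Finset.sum_congr rfl fun k hk => ?_
              have hk' := Finset.mem_range.1 hk
              have a1 : rp k = r' k := if_neg (by omega)
              have a2 : rp (k+1) = r' (k+1) := if_neg (by omega)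
              rw [a1, a2]
            · have a1 : rp i = r' i := if_neg (by omega)
              have a2 : rp (i+1) = c := if_pos rfl
              rw [a1, a2]
          rw [e4, e5]
          unfold angSum
          rw [hn'eq, sum_range_split, Finset.sum_range_succ
            (fun k => dirAngle v (ρ (r' k)) (ρ (r' (k+1)))) i, hmid]
          ring
        rw [hsplitsum, collapse hg (i+1) a c rp ha (by linarith) hcaδ hrp, hLHS,
          ih c b m' (fun k => r (k+1)) rs (by linarith) hcb hb hrt hrs]

end Stmt13Aux

/-- Well-definedness of the rotational angle `∠(ρ(a) v ρ(b), ρ)`: the sum of directed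
angles over a sufficiently fine partition of `[a,b]` does not depend on the partition. -/
theorem stmt_13 (ρ : ℝ → ℂ) (hρ : ContinuousOn ρ (Set.Icc 0 1))
    (v : ℂ) (hv : v ∉ ρ '' Set.Icc 0 1)
    (a b : ℝ) (ha : 0 ≤ a) (hab : a < b) (hb : b ≤ 1)
    (δ : ℝ) (hδ : 0 < δ)
    (hδfine : ∀ r ∈ Set.Icc (0 : ℝ) 1, ∀ s ∈ Set.Icc (0 : ℝ) 1, |r - s| < δ →
      dist (ρ r) (ρ s) < Metric.infDist v (ρ '' Set.Icc 0 1) / 3)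
    (n n' : ℕ) (r r' : ℕ → ℝ)
    (hr : IsFinePartition a b δ n r) (hr' : IsFinePartition a b δ n' r') :
    angSum ρ v n r = angSum ρ v n' r' := by
  have hSne : (ρ '' Set.Icc (0:ℝ) 1).Nonempty :=
    ⟨ρ 0, Set.mem_image_of_mem ρ (by constructor <;> norm_num)⟩
  have hScpt : IsCompact (ρ '' Set.Icc (0:ℝ) 1) := isCompact_Icc.image_of_continuousOn hρ
  set d := Metric.infDist v (ρ '' Set.Icc (0:ℝ) 1) with hddef
  have hd : 0 < d := (hScpt.isClosed.notMem_iff_infDist_pos hSne).1 hv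
  have hne : ∀ t ∈ Set.Icc (0:ℝ) 1, ρ t ≠ v := by
    intro t ht h
    exact hv ⟨t, ht, h⟩
  have hsmall : ∀ s ∈ Set.Icc (0:ℝ) 1, ∀ t ∈ Set.Icc (0:ℝ) 1, |s - t| < δ →
      |dirAngle v (ρ s) (ρ t)| < Real.pi / 2 := by
    intro s hs t ht hst
    have hdx : d ≤ ‖ρ s - v‖ := by
      have h1 := Metric.infDist_le_dist_of_mem (x := v) (Set.mem_image_of_mem ρ hs)
      rw [Complex.dist_eq, norm_sub_rev] at h1
      exact h1
    have hxy : ‖ρ t - ρ s‖ < d / 3 := by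
      have h1 := hδfine s hs t ht hst
      rw [Complex.dist_eq, norm_sub_rev] at h1
      exact h1
    have hBpos : 0 < ‖ρ s - v‖ := lt_of_lt_of_le hd hdx
    have hx0 : ρ s - v ≠ 0 := by
      intro h
      rw [h] at hBpos
      simp at hBpos
    set w : ℂ := (ρ t - v) / (ρ s - v) with hwdef
    have h1 : ‖w - 1‖ < 1 := by
      have hw1 : w - 1 = (ρ t - ρ s) / (ρ s - v) := by
        rw [hwdef, div_sub_one hx0]
        ring_nf
      rw [hw1, norm_div]
      rw [div_lt_one hBpos]
      linarith
    have hre : 0 < w.re := by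
      have h2 : |(w - 1).re| ≤ ‖w - 1‖ := Complex.abs_re_le_norm _
      rw [Complex.sub_re, Complex.one_re] at h2
      have := abs_le.1 h2
      linarith [this.1]
    have : |Complex.arg w| < Real.pi / 2 :=
      Complex.abs_arg_lt_pi_div_two_iff.mpr (Or.inl hre)
    exact this
  exact Stmt13Aux.main ⟨hne, hsmall⟩ n a b n' r r' ha hab hb hr hr'
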